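/- In a Gaussian DAG model, if σ is a permutation not consistent with G*, and k* is the largest node (in the true topological numbering 1,...,p) having a parent j* with σ^{-1}(k*) < σ^{-1}(j*), then Var(X_{k*} | X_{PRED_{k*}(σ)}) > Var(X_{k*} | X_{PA_{k*}(G*)}), strictly. -/

import Mathlib

open Matrix BigOperators

/-- Conditional variance of coordinate `j` of a centered Gaussian vector with covariance `S`,
given the coordinates in the index set `A`, i.e. the Schur complement
`S j j - S_{jA} (S_{AA})⁻¹ S_{Aj}`. -/
noncomputable def condVar {p : ℕ} (S : Matrix (Fin p) (Fin p) ℝ) (j : Fin p)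
    (A : Finset (Fin p)) : ℝ :=
  S j j - ∑ s : A, ∑ t : A,
    S j s.1 * (Matrix.of fun a b : A => S a.1 b.1)⁻¹ s t * S t.1 j

/-- The set of predecessors of node `j` under the ordering `σ`. -/
def PRED {p : ℕ} (σ : Equiv.Perm (Fin p)) (j : Fin p) : Finset (Fin p) :=
  Finset.univ.filter fun i => σ.symm i < σ.symm j

/-- `σ` is consistent with the DAG encoded by the weighted adjacency matrix `B`:
every edge `i → j` (i.e. `B i j ≠ 0`) goes forward in the ordering `σ`. -/
def Consistent {p : ℕ} (B : Matrix (Fin p) (Fin p) ℝ) (σ : Equiv.Perm (Fin p)) : Prop :=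
  ∀ i j, B i j ≠ 0 → σ.symm i < σ.symm j

/-- The covariance matrix `Σ = (I - Bᵀ)⁻¹ Ω (I - B)⁻¹` of the Gaussian linear SEM
`X = Bᵀ X + ε`, `ε ~ N(0, Ω)` with `Ω = diag ω`. -/
noncomputable def modelCov {p : ℕ} (B : Matrix (Fin p) (Fin p) ℝ) (ω : Fin p → ℝ) :
    Matrix (Fin p) (Fin p) ℝ :=
  (1 - B.transpose)⁻¹ * Matrix.diagonal ω * (1 - B)⁻¹

/-- The parent set of node `j` in the DAG encoded by `B`. -/
noncomputable def PA {p : ℕ} (B : Matrix (Fin p) (Fin p) ℝ) (j : Fin p) : Finset (Fin p) :=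
  Finset.univ.filter fun i => B i j ≠ 0


namespace Stmt14Aux

variable {p : ℕ}

/-- Extension of a vector on a finset by zero. -/
noncomputable def ext (A : Finset (Fin p)) (b : A → ℝ) : Fin p → ℝ :=
  fun i => if h : i ∈ A then b ⟨i, h⟩ else 0

lemma ext_apply_mem (A : Finset (Fin p)) (b : A → ℝ) (s : A) :
    ext A b s.1 = b s := by
  simp [ext]

lemma ext_apply_not_mem (A : Finset (Fin p)) (b : A → ℝ) {i : Fin p} (h : i ∉ A) :
    ext A b i = 0 := by
  simp [ext, h]

lemma sum_ext (A : Finset (Fin p)) (b : A → ℝ) (v : Fin p → ℝ) :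
    ∑ i, ext A b i * v i = ∑ s : A, b s * v s.1 := by
  have h1 : ∀ s : A, b s * v s.1 = ext A b s.1 * v s.1 := by
    intro s; rw [ext_apply_mem]
  rw [Finset.sum_congr rfl (fun s _ => h1 s),
    Finset.sum_coe_sort A (fun i => ext A b i * v i)]
  exact (Finset.sum_subset A.subset_univ (fun x _ hx => by
    rw [ext_apply_not_mem A b hx, zero_mul])).symm

section Main

variable (B : Matrix (Fin p) (Fin p) ℝ) (ω : Fin p → ℝ)

lemma det_one (hB : ∀ i j, B i j ≠ 0 → i < j) : (1 - B).det = 1 := by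
  have hdiag : ∀ i, B i i = 0 := by
    intro i; by_contra h; exact absurd (hB i i h) (lt_irrefl i)
  have ht : (1 - B).BlockTriangular id := by
    intro i j hij
    have h1 : i ≠ j := fun h => by subst h; exact lt_irrefl _ hij
    have h2 : B i j = 0 := by
      by_contra h; exact absurd (hB i j h) (not_lt.2 (le_of_lt hij))
    simp [Matrix.sub_apply, Matrix.one_apply_ne h1, h2]
  rw [Matrix.det_of_upperTriangular ht]
  have : ∀ i : Fin p, (1 - B) i i = 1 := by
    intro i; simp [Matrix.sub_apply, Matrix.one_apply_eq, hdiag i]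
  simp [this]

lemma hMN (hB : ∀ i j, B i j ≠ 0 → i < j) : (1 - B) * (1 - B)⁻¹ = 1 :=
  Matrix.mul_nonsing_inv _ (by rw [det_one B hB]; exact isUnit_one)

lemma hNM (hB : ∀ i j, B i j ≠ 0 → i < j) : (1 - B)⁻¹ * (1 - B) = 1 :=
  Matrix.nonsing_inv_mul _ (by rw [det_one B hB]; exact isUnit_one)

lemma Nrec (hB : ∀ i j, B i j ≠ 0 → i < j) : (1 - B)⁻¹ = 1 + (1 - B)⁻¹ * B := by
  have h := hNM B hB
  rw [Matrix.mul_sub, Matrix.mul_one] at h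
  exact sub_eq_iff_eq_add.mp h

lemma Napp (hB : ∀ i j, B i j ≠ 0 → i < j) (i j : Fin p) :
    (1 - B)⁻¹ i j = (if i = j then (1:ℝ) else 0) + ∑ k, (1 - B)⁻¹ i k * B k j := by
  conv_lhs => rw [Nrec B hB]
  simp [Matrix.add_apply, Matrix.one_apply, Matrix.mul_apply]

lemma Ntri (hB : ∀ i j, B i j ≠ 0 → i < j) : ∀ (n : ℕ) (k i : Fin p), k.val < n → k < i → (1 - B)⁻¹ i k = 0 := by
  intro n
  induction n with
  | zero => intro k i hk _; omega
  | succ n ih =>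
    intro k i hk hki
    rw [Napp B hB, if_neg (by exact fun h => absurd hki (by simp [h]))]
    rw [zero_add]
    apply Finset.sum_eq_zero
    intro m _
    by_cases hm : B m k = 0
    · rw [hm, mul_zero]
    · have hmk : m < k := hB m k hm
      rw [ih m i (by omega) (lt_trans hmk hki), zero_mul]

lemma Ndiag (hB : ∀ i j, B i j ≠ 0 → i < j) (i : Fin p) : (1 - B)⁻¹ i i = 1 := by
  rw [Napp B hB, if_pos rfl]
  have : ∑ k, (1 - B)⁻¹ i k * B k i = 0 := by
    apply Finset.sum_eq_zero
    intro m _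
    by_cases hm : B m i = 0
    · rw [hm, mul_zero]
    · rw [Ntri B hB p m i m.isLt (hB m i hm), zero_mul]
  rw [this, add_zero]

/-- Descendant lemma: nonzero entries `N ks j`, `j ≠ ks`, correspond to descendants of `ks`,
which by maximality come after `ks` under `σ`. -/
lemma Ndes (hB : ∀ i j, B i j ≠ 0 → i < j) (σ : Equiv.Perm (Fin p)) (ks : Fin p)
    (hmax : ∀ k, ks < k → ∀ i, B i k ≠ 0 → σ.symm i < σ.symm k) :
    ∀ (n : ℕ) (j : Fin p), j.val < n → (1 - B)⁻¹ ks j ≠ 0 → j ≠ ks →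
      ks < j ∧ σ.symm ks < σ.symm j := by
  intro n
  induction n with
  | zero => intro j hj _ _; omega
  | succ n ih =>
    intro j hj hN hne
    rw [Napp B hB, if_neg (fun h => hne h.symm), zero_add] at hN
    obtain ⟨k, _, hk⟩ := Finset.exists_ne_zero_of_sum_ne_zero hN
    have hNk : (1 - B)⁻¹ ks k ≠ 0 := fun h => hk (by rw [h, zero_mul])
    have hBk : B k j ≠ 0 := fun h => hk (by rw [h, mul_zero])
    have hkj : k < j := hB k j hBk
    by_cases hkk : k = ks
    · subst hkk
      exact ⟨hkj, hmax j hkj k hBk⟩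
    · obtain ⟨h1, h2⟩ := ih k (by omega) hNk hkk
      exact ⟨lt_trans h1 hkj, lt_trans h2 (hmax j (lt_trans h1 hkj) k hBk)⟩

lemma Sfact : modelCov B ω = (1 - B)⁻¹ᵀ * Matrix.diagonal ω * (1 - B)⁻¹ := by
  unfold modelCov
  rw [show (1 - B.transpose) = (1 - B)ᵀ by rw [Matrix.transpose_sub, Matrix.transpose_one],
    ← Matrix.transpose_nonsing_inv]

lemma quad (hB : ∀ i j, B i j ≠ 0 → i < j) (c : Fin p → ℝ) :
    c ⬝ᵥ (modelCov B ω *ᵥ c) = ∑ i, ω i * ((1 - B)⁻¹ *ᵥ c) i ^ 2 := by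
  rw [Sfact, ← Matrix.mulVec_mulVec, ← Matrix.mulVec_mulVec,
    Matrix.dotProduct_mulVec, Matrix.vecMul_transpose]
  simp only [dotProduct, Matrix.mulVec_diagonal]
  exact Finset.sum_congr rfl (fun i _ => by ring)

lemma recover (hB : ∀ i j, B i j ≠ 0 → i < j) (c : Fin p → ℝ) : (1 - B) *ᵥ ((1 - B)⁻¹ *ᵥ c) = c := by
  rw [Matrix.mulVec_mulVec, hMN B hB, Matrix.one_mulVec]

lemma quad_pos (hB : ∀ i j, B i j ≠ 0 → i < j) (hω : ∀ j, 0 < ω j) (c : Fin p → ℝ) (hc : c ≠ 0) :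
    0 < c ⬝ᵥ (modelCov B ω *ᵥ c) := by
  rw [quad B ω hB]
  have hv : (1 - B)⁻¹ *ᵥ c ≠ 0 := by
    intro h
    apply hc
    rw [← recover B hB c, h, Matrix.mulVec_zero]
  obtain ⟨i, hi⟩ := Function.ne_iff.mp hv
  apply Finset.sum_pos' (fun k _ => mul_nonneg (hω k).le (sq_nonneg _))
  exact ⟨i, Finset.mem_univ i, mul_pos (hω i) (pow_two_pos_of_ne_zero hi)⟩

lemma Ssymm (a b : Fin p) : modelCov B ω a b = modelCov B ω b a := by
  have h : (modelCov B ω)ᵀ = modelCov B ω := by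
    rw [Sfact]
    rw [Matrix.transpose_mul, Matrix.transpose_mul, Matrix.transpose_transpose,
      Matrix.diagonal_transpose, Matrix.mul_assoc]
  conv_lhs => rw [← h]
  rfl

lemma symdot (hB : ∀ i j, B i j ≠ 0 → i < j) (x y : Fin p → ℝ) :
    x ⬝ᵥ (modelCov B ω *ᵥ y) = y ⬝ᵥ (modelCov B ω *ᵥ x) := by
  have h : (modelCov B ω)ᵀ = modelCov B ω := by
    ext a b; exact Ssymm B ω b a
  rw [Matrix.dotProduct_mulVec, ← h, Matrix.vecMul_transpose, dotProduct_comm, h]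


lemma symdot2 {n : Type*} [Fintype n] (M : Matrix n n ℝ) (hM : Mᵀ = M) (x y : n → ℝ) :
    x ⬝ᵥ (M *ᵥ y) = y ⬝ᵥ (M *ᵥ x) := by
  rw [Matrix.dotProduct_mulVec, ← hM, Matrix.vecMul_transpose, dotProduct_comm, hM]

/-- The principal submatrix of the covariance on the index set `A`. -/
noncomputable def Tm (S : Matrix (Fin p) (Fin p) ℝ) (A : Finset (Fin p)) : Matrix A A ℝ :=
  Matrix.of fun a b : A => S a.1 b.1

lemma Tquad (S : Matrix (Fin p) (Fin p) ℝ) (A : Finset (Fin p)) (b b' : A → ℝ) :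
    ext A b ⬝ᵥ (S *ᵥ ext A b') = b ⬝ᵥ ((Tm S A) *ᵥ b') := by
  show ∑ i, ext A b i * (S *ᵥ ext A b') i = ∑ s : A, b s * (Tm S A *ᵥ b') s
  rw [sum_ext]
  apply Finset.sum_congr rfl
  intro s _
  congr 1
  show ∑ i, S s.1 i * ext A b' i = ∑ t : A, Tm S A s t * b' t
  rw [show (∑ i, S s.1 i * ext A b' i) = ∑ i, ext A b' i * S s.1 i from
    Finset.sum_congr rfl (fun i _ => mul_comm _ _), sum_ext]
  exact Finset.sum_congr rfl (fun t _ => mul_comm _ _)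

lemma Tsymm (B : Matrix (Fin p) (Fin p) ℝ) (ω : Fin p → ℝ) (A : Finset (Fin p)) :
    (Tm (modelCov B ω) A)ᵀ = Tm (modelCov B ω) A := by
  ext s t
  simp only [Matrix.transpose_apply, Tm, Matrix.of_apply]
  exact Ssymm B ω t.1 s.1

lemma TposDef (B : Matrix (Fin p) (Fin p) ℝ) (ω : Fin p → ℝ)
    (hB : ∀ i j, B i j ≠ 0 → i < j) (hω : ∀ j, 0 < ω j) (A : Finset (Fin p)) :
    (Tm (modelCov B ω) A).PosDef := by
  refine Matrix.PosDef.of_dotProduct_mulVec_pos ?_ ?_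
  · show (Tm (modelCov B ω) A)ᴴ = _
    ext s t
    simp only [Matrix.conjTranspose_apply, Tm, Matrix.of_apply, star_trivial]
    exact Ssymm B ω t.1 s.1
  · intro x hx
    have hx' : ext A x ≠ 0 := by
      obtain ⟨s, hs⟩ := Function.ne_iff.mp hx
      intro h
      apply hs
      have h2 := congrFun h s.1
      rwa [ext_apply_mem] at h2
    have hq := quad_pos B ω hB hω (ext A x) hx'
    rw [Tquad] at hq
    rwa [show star x = x from funext fun s => star_trivial _]

lemma Tunit (B : Matrix (Fin p) (Fin p) ℝ) (ω : Fin p → ℝ)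
    (hB : ∀ i j, B i j ≠ 0 → i < j) (hω : ∀ j, 0 < ω j) (A : Finset (Fin p)) :
    IsUnit (Tm (modelCov B ω) A).det :=
  (TposDef B ω hB hω A).det_pos.ne'.isUnit

lemma Qexp (B : Matrix (Fin p) (Fin p) ℝ) (ω : Fin p → ℝ)
    (hB : ∀ i j, B i j ≠ 0 → i < j) (j : Fin p) (A : Finset (Fin p)) (b : A → ℝ) :
    (Pi.single j 1 - ext A b) ⬝ᵥ (modelCov B ω *ᵥ (Pi.single j 1 - ext A b)) =
      modelCov B ω j j - 2 * (b ⬝ᵥ (fun s : A => modelCov B ω s.1 j))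
        + b ⬝ᵥ (Tm (modelCov B ω) A *ᵥ b) := by
  set S := modelCov B ω with hS
  have h1 : Pi.single j (1:ℝ) ⬝ᵥ (S *ᵥ Pi.single j 1) = S j j := by
    simp [Matrix.mulVec_single, single_dotProduct]
  have h2 : Pi.single j (1:ℝ) ⬝ᵥ (S *ᵥ ext A b) = b ⬝ᵥ (fun s : A => S s.1 j) := by
    rw [single_dotProduct, one_mul]
    show ∑ i, S j i * ext A b i = ∑ s : A, b s * S s.1 j
    rw [show (∑ i, S j i * ext A b i) = ∑ i, ext A b i * S j i from
      Finset.sum_congr rfl (fun i _ => mul_comm _ _), sum_ext]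
    exact Finset.sum_congr rfl (fun s _ => by rw [hS, Ssymm B ω j s.1])
  have hsym : Sᵀ = S := by ext a c; exact Ssymm B ω c a
  have h3 : ext A b ⬝ᵥ (S *ᵥ Pi.single j 1) = b ⬝ᵥ (fun s : A => S s.1 j) := by
    rw [symdot2 S hsym]; exact h2
  have h4 := Tquad S A b b
  rw [Matrix.mulVec_sub, dotProduct_sub, sub_dotProduct,
    sub_dotProduct, h1, h2, h3, h4]
  ring

lemma condVar_key (B : Matrix (Fin p) (Fin p) ℝ) (ω : Fin p → ℝ)
    (hB : ∀ i j, B i j ≠ 0 → i < j) (hω : ∀ j, 0 < ω j) (j : Fin p) (A : Finset (Fin p)) :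
    condVar (modelCov B ω) j A =
      modelCov B ω j j -
        ((Tm (modelCov B ω) A)⁻¹ *ᵥ (fun s : A => modelCov B ω s.1 j)) ⬝ᵥ
          (fun s : A => modelCov B ω s.1 j) := by
  set S := modelCov B ω with hS
  set T := Tm S A with hT
  set r : A → ℝ := fun s => S s.1 j with hr
  show S j j - ∑ s : A, ∑ t : A, S j s.1 * T⁻¹ s t * S t.1 j = S j j - (T⁻¹ *ᵥ r) ⬝ᵥ r
  congr 1
  show _ = ∑ s : A, (T⁻¹ *ᵥ r) s * r s
  apply Finset.sum_congr rfl
  intro s _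
  show ∑ t : A, S j s.1 * T⁻¹ s t * S t.1 j = (∑ t : A, T⁻¹ s t * r t) * r s
  rw [Finset.sum_mul]
  apply Finset.sum_congr rfl
  intro t _
  show S j s.1 * T⁻¹ s t * S t.1 j = T⁻¹ s t * S t.1 j * S s.1 j
  rw [hS, Ssymm B ω j s.1]
  ring

lemma condVar_eq (B : Matrix (Fin p) (Fin p) ℝ) (ω : Fin p → ℝ)
    (hB : ∀ i j, B i j ≠ 0 → i < j) (hω : ∀ j, 0 < ω j) (j : Fin p) (A : Finset (Fin p)) :
    condVar (modelCov B ω) j A =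
      (Pi.single j 1 - ext A ((Tm (modelCov B ω) A)⁻¹ *ᵥ (fun s : A => modelCov B ω s.1 j))) ⬝ᵥ
        (modelCov B ω *ᵥ
          (Pi.single j 1 -
            ext A ((Tm (modelCov B ω) A)⁻¹ *ᵥ (fun s : A => modelCov B ω s.1 j)))) := by
  set S := modelCov B ω with hS
  set T := Tm S A with hT
  set r : A → ℝ := fun s => S s.1 j with hr
  set bs : A → ℝ := T⁻¹ *ᵥ r with hbs
  rw [Qexp B ω hB j A bs, condVar_key B ω hB hω j A]
  have hTT : T * T⁻¹ = 1 := Matrix.mul_nonsing_inv _ (Tunit B ω hB hω A)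
  have hTbs : T *ᵥ bs = r := by
    rw [hbs, Matrix.mulVec_mulVec, hTT, Matrix.one_mulVec]
  rw [hTbs]
  rw [show bs ⬝ᵥ r = r ⬝ᵥ bs from dotProduct_comm _ _]
  ring

lemma condVar_le (B : Matrix (Fin p) (Fin p) ℝ) (ω : Fin p → ℝ)
    (hB : ∀ i j, B i j ≠ 0 → i < j) (hω : ∀ j, 0 < ω j) (j : Fin p) (A : Finset (Fin p))
    (b : A → ℝ) :
    condVar (modelCov B ω) j A ≤
      (Pi.single j 1 - ext A b) ⬝ᵥ (modelCov B ω *ᵥ (Pi.single j 1 - ext A b)) := by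
  set S := modelCov B ω with hS
  set T := Tm S A with hT
  set r : A → ℝ := fun s => S s.1 j with hr
  set bs : A → ℝ := T⁻¹ *ᵥ r with hbs
  rw [condVar_eq B ω hB hω j A, Qexp B ω hB j A bs, Qexp B ω hB j A b]
  have hTT : T * T⁻¹ = 1 := Matrix.mul_nonsing_inv _ (Tunit B ω hB hω A)
  have hTbs : T *ᵥ bs = r := by
    rw [hbs, Matrix.mulVec_mulVec, hTT, Matrix.one_mulVec]
  set d : A → ℝ := b - bs with hd
  have hTsym : Tᵀ = T := Tsymm B ω A
  have hdd : 0 ≤ d ⬝ᵥ (T *ᵥ d) := by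
    rcases eq_or_ne d 0 with h | h
    · simp [h]
    · have h2 := (TposDef B ω hB hω A).dotProduct_mulVec_pos h
      rw [show star d = d from funext fun s => star_trivial _] at h2
      exact le_of_lt h2
  have hexp : d ⬝ᵥ (T *ᵥ d) =
      b ⬝ᵥ (T *ᵥ b) - 2 * (b ⬝ᵥ r) + bs ⬝ᵥ (T *ᵥ bs) := by
    have e1 : b ⬝ᵥ (T *ᵥ bs) = b ⬝ᵥ r := by rw [hTbs]
    have e2 : bs ⬝ᵥ (T *ᵥ b) = b ⬝ᵥ r := by rw [symdot2 T hTsym, hTbs]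
    rw [hd, Matrix.mulVec_sub, dotProduct_sub, sub_dotProduct,
      sub_dotProduct, e1, e2]
    ring
  have e3 : bs ⬝ᵥ (T *ᵥ bs) = bs ⬝ᵥ r := by rw [hTbs]
  linarith [hdd, hexp.symm.le]

end Main

end Stmt14Aux


/-- Suppose the identity is a topological numbering of the true DAG `G*` (encoded by `B`),
`σ` is not consistent with `G*`, and `k*` is the largest node having a parent `j*` with
`σ⁻¹(k*) < σ⁻¹(j*)`. Then the conditional variance of `X_{k*}` given its predecessors
under `σ` is strictly larger than that given its parents in `G*`. -/
theorem stmt14 {p : ℕ} (B : Matrix (Fin p) (Fin p) ℝ) (ω : Fin p → ℝ)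
    (hω : ∀ j, 0 < ω j)
    (hB : ∀ i j, B i j ≠ 0 → i < j)
    (σ : Equiv.Perm (Fin p)) (ks js : Fin p)
    (hedge : B js ks ≠ 0) (hrev : σ.symm ks < σ.symm js)
    (hmax : ∀ k, ks < k → ∀ i, B i k ≠ 0 → σ.symm i < σ.symm k) :
    condVar (modelCov B ω) ks (PA B ks) <
      condVar (modelCov B ω) ks (PRED σ ks) := by
  classical
  have hjs_lt : js < ks := hB js ks hedge
  have hjs_ne : js ≠ ks := ne_of_lt hjs_lt
  -- Step 1: conditioning on the parents gives at most ω ks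
  have h1 : condVar (modelCov B ω) ks (PA B ks) ≤ ω ks := by
    set b0 : {x // x ∈ PA B ks} → ℝ := fun s => B s.1 ks with hb0
    refine le_trans (Stmt14Aux.condVar_le B ω hB hω ks (PA B ks) b0) (le_of_eq ?_)
    have hc : (Pi.single ks 1 - Stmt14Aux.ext (PA B ks) b0) = (1 - B) *ᵥ Pi.single ks 1 := by
      funext i
      have hext : Stmt14Aux.ext (PA B ks) b0 i = B i ks := by
        by_cases h : i ∈ PA B ks
        · exact Stmt14Aux.ext_apply_mem (PA B ks) b0 ⟨i, h⟩
        · rw [Stmt14Aux.ext_apply_not_mem _ _ h]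
          by_cases h2 : B i ks = 0
          · rw [h2]
          · exact absurd (Finset.mem_filter.mpr ⟨Finset.mem_univ i, h2⟩) h
      simp only [Pi.sub_apply, hext, Matrix.mulVec_single_one, Matrix.col_apply, mul_one, Matrix.sub_apply,
        Matrix.one_apply, Pi.single_apply]
    rw [hc, Stmt14Aux.quad B ω hB, Matrix.mulVec_mulVec, Stmt14Aux.hNM B hB, Matrix.one_mulVec]
    rw [Finset.sum_eq_single ks]
    · simp
    · intro m _ hm
      rw [Pi.single_eq_of_ne hm]
      ring
    · intro h; exact absurd (Finset.mem_univ ks) h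
  -- Step 2: conditioning on the predecessors gives strictly more than ω ks
  have h2 : ω ks < condVar (modelCov B ω) ks (PRED σ ks) := by
    rw [Stmt14Aux.condVar_eq B ω hB hω ks (PRED σ ks)]
    set bs : {x // x ∈ PRED σ ks} → ℝ :=
      (Stmt14Aux.Tm (modelCov B ω) (PRED σ ks))⁻¹ *ᵥ (fun s => modelCov B ω s.1 ks) with hbs
    set c : Fin p → ℝ := Pi.single ks 1 - Stmt14Aux.ext (PRED σ ks) bs with hcdef
    have hks_not : ks ∉ PRED σ ks := by
      simp [PRED]
    have hcks : c ks = 1 := by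
      rw [hcdef]
      simp [Stmt14Aux.ext_apply_not_mem _ _ hks_not]
    have hsupp : ∀ i, i ≠ ks → i ∉ PRED σ ks → c i = 0 := by
      intro i hi hmem
      rw [hcdef]
      simp [Pi.single_eq_of_ne hi, Stmt14Aux.ext_apply_not_mem _ _ hmem]
    have hjs_not : js ∉ PRED σ ks := by
      simp only [PRED, Finset.mem_filter, Finset.mem_univ, true_and]
      exact asymm hrev
    have hcjs : c js = 0 := hsupp js hjs_ne hjs_not
    set v : Fin p → ℝ := (1 - B)⁻¹ *ᵥ c with hv
    have hvks : v ks = 1 := by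
      show ∑ m, (1 - B)⁻¹ ks m * c m = 1
      rw [Finset.sum_eq_single ks]
      · rw [Stmt14Aux.Ndiag B hB, hcks, mul_one]
      · intro m _ hm
        by_cases hcm : c m = 0
        · rw [hcm, mul_zero]
        · have hmem : m ∈ PRED σ ks := by
            by_contra h
            exact hcm (hsupp m hm h)
          have hlt : σ.symm m < σ.symm ks := by
            simpa only [PRED, Finset.mem_filter, Finset.mem_univ, true_and] using hmem
          have hN0 : (1 - B)⁻¹ ks m = 0 := by
            by_contra hN
            obtain ⟨_, hgt⟩ := Stmt14Aux.Ndes B hB σ ks hmax p m m.isLt hN hm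
            exact absurd (lt_trans hgt hlt) (lt_irrefl _)
          rw [hN0, zero_mul]
      · intro h; exact absurd (Finset.mem_univ ks) h
    have hex : ∃ m, m ≠ ks ∧ v m ≠ 0 := by
      by_contra h
      push_neg at h
      have hveq : v = Pi.single ks 1 := by
        funext m
        by_cases hm : m = ks
        · subst hm; rw [hvks, Pi.single_eq_same]
        · rw [h m hm, Pi.single_eq_of_ne hm]
      have hcc : c = (1 - B) *ᵥ Pi.single ks 1 := by
        rw [← hveq, hv]
        exact (Stmt14Aux.recover B hB c).symm
      have hcjs2 : c js = (1 - B) js ks * 1 := by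
        rw [hcc, Matrix.mulVec_single_one, Matrix.col_apply, mul_one]
      rw [hcjs, mul_one, Matrix.sub_apply, Matrix.one_apply_ne hjs_ne] at hcjs2
      exact hedge (by linarith [hcjs2])
    obtain ⟨m, hm, hvm⟩ := hex
    rw [Stmt14Aux.quad B ω hB]
    have hle : ∑ i ∈ ({ks, m} : Finset (Fin p)), ω i * v i ^ 2 ≤
        ∑ i, ω i * ((1 - B)⁻¹ *ᵥ c) i ^ 2 := by
      refine Finset.sum_le_sum_of_subset_of_nonneg (Finset.subset_univ _) ?_
      intro i _ _
      exact mul_nonneg (hω i).le (sq_nonneg _)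
    rw [Finset.sum_pair (Ne.symm hm)] at hle
    have hpos : 0 < ω m * v m ^ 2 := mul_pos (hω m) (pow_two_pos_of_ne_zero hvm)
    have : ω ks * v ks ^ 2 = ω ks := by rw [hvks]; ring
    linarith
  exact lt_of_le_of_lt h1 h2
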